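/- Let X be an invertible n×n matrix and Y an n×n matrix over a field, and set U = X⁻¹Y. For integers k, l ≥ 1 with k+l ≤ n, let Φ_{kl}(X,Y) be the n×n matrix whose columns are, in order: columns n−k+1,…,n of the identity matrix, columns n−l+1,…,n of U, and the last (n-th) column of U^m for each m = 2,…,n−k−l+1; set φ̃_{kl}(X,Y) := det Φ_{kl}(X,Y). Then for every invertible n×n matrix A and every unipotent lower-triangular n×n matrix N₋, one has φ̃_{kl}(A X N₋, A Y N₋) = φ̃_{kl}(X, Y). -/
import Mathlib


/-- The entry of a matrix at the 1-based position `(a, b)`; equals `0` out of range. -/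
def ent {F : Type*} [Zero F] {r c : ℕ} (A : Matrix (Fin r) (Fin c) F) (a b : ℕ) : F :=
  if h : a - 1 < r ∧ b - 1 < c then A ⟨a - 1, h.1⟩ ⟨b - 1, h.2⟩ else 0

/-- The determinant of the `p × p` submatrix of `A` whose rows are the (1-based) rows
`row 0, row 1, …, row (p-1)` of `A` and whose columns are `col 0, …, col (p-1)`. -/
noncomputable def subdet {F : Type*} [Field F] {r c : ℕ} (A : Matrix (Fin r) (Fin c) F)
    (p : ℕ) (row col : ℕ → ℕ) : F :=
  (Matrix.of fun a b : Fin p => ent A (row a.val) (col b.val)).det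
/-- `φ̃_{kl}(X,Y) = det Φ_{kl}(X,Y)`, where `Φ_{kl}(X,Y)` is the `n × n` matrix whose columns
are, in order: the last `k` columns of the identity matrix (`U⁰`), the last `l` columns of
`U = X⁻¹Y`, and the last column of `U^m` for `m = 2, …, n−k−l+1`. -/
noncomputable def phitilde {F : Type*} [Field F] (n k l : ℕ)
    (X Y : Matrix (Fin n) (Fin n) F) : F :=
  (Matrix.of fun a b : Fin n =>
    if b.val < k then ent (1 : Matrix (Fin n) (Fin n) F) (a.val + 1) (n - k + 1 + b.val)
    else if b.val < k + l then ent (X⁻¹ * Y) (a.val + 1) (n - l + 1 + (b.val - k))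
    else ent ((X⁻¹ * Y) ^ (b.val - k - l + 2)) (a.val + 1) n).det

section Aux

variable {F : Type*} [Field F] {n k l : ℕ}

lemma ent_eq {r c : ℕ} {G : Type*} [Zero G] (M : Matrix (Fin r) (Fin c) G) (a : Fin r) (j : ℕ)
    (h : j - 1 < c) : ent M (a.val + 1) j = M a ⟨j - 1, h⟩ := by
  unfold ent
  rw [dif_pos ⟨by omega, h⟩]
  congr 1

/-- column index (0-based) of the `b`-th column of `Φ`. -/
def cIdx (n k l : ℕ) (hk : 1 ≤ k) (hl : 1 ≤ l) (hkl : k + l ≤ n) (b : Fin n) : Fin n :=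
  if hb : b.val < k then ⟨n - k + b.val, by omega⟩
  else if hb' : b.val < k + l then ⟨n - l + (b.val - k), by omega⟩
  else ⟨n - 1, by omega⟩

def PhiM (hk : 1 ≤ k) (hl : 1 ≤ l) (hkl : k + l ≤ n) (U : Matrix (Fin n) (Fin n) F) :
    Matrix (Fin n) (Fin n) F :=
  Matrix.of fun a b =>
    (if b.val < k then (1 : Matrix (Fin n) (Fin n) F)
     else if b.val < k + l then U
     else U ^ (b.val - k - l + 2)) a (cIdx n k l hk hl hkl b)

lemma phitilde_eq (hk : 1 ≤ k) (hl : 1 ≤ l) (hkl : k + l ≤ n) (X Y : Matrix (Fin n) (Fin n) F) :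
    phitilde n k l X Y = (PhiM hk hl hkl (X⁻¹ * Y)).det := by
  unfold phitilde PhiM
  congr 1
  ext a b
  simp only [Matrix.of_apply, cIdx]
  by_cases hb : b.val < k
  · rw [if_pos hb, dif_pos hb, if_pos hb, ent_eq _ _ _ (by omega)]
    exact congrArg _ (Fin.ext (show n - k + 1 + (b : ℕ) - 1 = n - k + (b : ℕ) by omega))
  · rw [if_neg hb, dif_neg hb, if_neg hb]
    by_cases hb' : b.val < k + l
    · rw [if_pos hb', dif_pos hb', if_pos hb', ent_eq _ _ _ (by omega)]
      exact congrArg _ (Fin.ext (show n - l + 1 + ((b : ℕ) - k) - 1 = n - l + ((b : ℕ) - k) by omega))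
    · rw [if_neg hb', dif_neg hb', if_neg hb', ent_eq _ _ _ (by omega)]

end Aux

section Main

variable {F : Type*} [Field F] {n k l : ℕ}

def Bmat (hk : 1 ≤ k) (hl : 1 ≤ l) (hkl : k + l ≤ n) (Nm : Matrix (Fin n) (Fin n) F) :
    Matrix (Fin n) (Fin n) F :=
  Matrix.of fun j b =>
    if b.val < k then
      (if j.val < k then Nm (cIdx n k l hk hl hkl j) (cIdx n k l hk hl hkl b) else 0)
    else if b.val < k + l then
      (if k ≤ j.val ∧ j.val < k + l then Nm (cIdx n k l hk hl hkl j) (cIdx n k l hk hl hkl b)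
       else 0)
    else if j = b then 1 else 0

lemma conjPowAux (M N : Matrix (Fin n) (Fin n) F) (h1 : N * N⁻¹ = 1) (h2 : N⁻¹ * N = 1) (m : ℕ) :
    (N⁻¹ * M * N) ^ m = N⁻¹ * M ^ m * N := by
  induction m with
  | zero => simp [h2]
  | succ m ih =>
    rw [pow_succ, pow_succ, ih,
      show N⁻¹ * M ^ m * N * (N⁻¹ * M * N) = N⁻¹ * M ^ m * (N * N⁻¹) * (M * N) by noncomm_ring,
      h1]
    noncomm_ring

lemma key (hk : 1 ≤ k) (hl : 1 ≤ l) (hkl : k + l ≤ n) (U Nm : Matrix (Fin n) (Fin n) F)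
    (hNm_tri : ∀ a b : Fin n, a < b → Nm a b = 0) (hNm_diag : ∀ a : Fin n, Nm a a = 1)
    (h1 : Nm * Nm⁻¹ = 1) (h2 : Nm⁻¹ * Nm = 1) :
    Nm * PhiM hk hl hkl (Nm⁻¹ * U * Nm) = PhiM hk hl hkl U * Bmat hk hl hkl Nm := by
  ext a b
  rw [Matrix.mul_apply, Matrix.mul_apply]
  simp only [PhiM, Bmat, Matrix.of_apply]
  by_cases hb : b.val < k
  · simp only [if_pos hb]
    have hcb : cIdx n k l hk hl hkl b = ⟨n - k + b.val, by omega⟩ := dif_pos hb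
    have hLHS : (∑ i, Nm a i * (1 : Matrix (Fin n) (Fin n) F) i (cIdx n k l hk hl hkl b))
        = Nm a (cIdx n k l hk hl hkl b) := by
      rw [← Matrix.mul_apply, Matrix.mul_one]
    rw [hLHS]
    by_cases ha : n - k ≤ a.val
    · rw [Finset.sum_eq_single (⟨a.val - (n - k), by omega⟩ : Fin n)]
      · have hj0k : ((⟨a.val - (n - k), by omega⟩ : Fin n) : ℕ) < k := by
          show a.val - (n - k) < k
          have := a.isLt; omega
        rw [if_pos hj0k, if_pos hj0k]
        have hcj0 : cIdx n k l hk hl hkl ⟨a.val - (n - k), by omega⟩ = a := by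
          rw [cIdx, dif_pos hj0k]
          exact Fin.ext (show n - k + (a.val - (n - k)) = a.val by omega)
        rw [hcj0, Matrix.one_apply_eq, one_mul]
      · intro j _ hj
        by_cases hjk : j.val < k
        · rw [if_pos hjk, if_pos hjk]
          have hne : a ≠ cIdx n k l hk hl hkl j := by
            rw [cIdx, dif_pos hjk]
            intro hcon
            have hv : a.val = n - k + j.val := congrArg Fin.val hcon
            exact hj (Fin.ext (show j.val = a.val - (n - k) by omega))
          rw [Matrix.one_apply_ne hne, zero_mul]
        · simp only [if_neg hjk, mul_zero]
      · intro h; exact absurd (Finset.mem_univ _) h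
    · have hL : Nm a (cIdx n k l hk hl hkl b) = 0 := by
        apply hNm_tri
        rw [hcb]
        exact Fin.lt_def.mpr (show a.val < n - k + b.val by omega)
      rw [hL]
      symm
      apply Finset.sum_eq_zero
      intro j _
      by_cases hjk : j.val < k
      · rw [if_pos hjk, if_pos hjk]
        have hne : a ≠ cIdx n k l hk hl hkl j := by
          rw [cIdx, dif_pos hjk]
          intro hcon
          have hv : a.val = n - k + j.val := congrArg Fin.val hcon
          omega
        rw [Matrix.one_apply_ne hne, zero_mul]
      · simp only [if_neg hjk, mul_zero]
  · by_cases hb' : b.val < k + l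
    · simp only [if_neg hb, if_pos hb']
      have hcb : (cIdx n k l hk hl hkl b).val = n - l + (b.val - k) := by
        rw [cIdx, dif_neg hb, dif_pos hb']
      have hLHS : (∑ i, Nm a i * (Nm⁻¹ * U * Nm) i (cIdx n k l hk hl hkl b))
          = ∑ i, (if n - l ≤ i.val then U a i * Nm i (cIdx n k l hk hl hkl b) else 0) := by
        rw [← Matrix.mul_apply,
          show Nm * (Nm⁻¹ * U * Nm) = U * Nm by
            rw [← Matrix.mul_assoc, ← Matrix.mul_assoc, h1, Matrix.one_mul],
          Matrix.mul_apply]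
        refine Finset.sum_congr rfl (fun i _ => ?_)
        by_cases hi : n - l ≤ i.val
        · rw [if_pos hi]
        · rw [if_neg hi, hNm_tri i _ (by rw [Fin.lt_def, hcb]; omega), mul_zero]
      rw [hLHS]
      have hRHS : (∑ j, (if j.val < k then (1 : Matrix (Fin n) (Fin n) F)
            else if j.val < k + l then U else U ^ (j.val - k - l + 2)) a (cIdx n k l hk hl hkl j) *
            (if k ≤ j.val ∧ j.val < k + l then
              Nm (cIdx n k l hk hl hkl j) (cIdx n k l hk hl hkl b) else 0))
          = ∑ j, (if k ≤ j.val ∧ j.val < k + l then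
              U a (cIdx n k l hk hl hkl j) * Nm (cIdx n k l hk hl hkl j) (cIdx n k l hk hl hkl b)
              else 0) := by
        refine Finset.sum_congr rfl (fun j _ => ?_)
        by_cases hj : k ≤ j.val ∧ j.val < k + l
        · rw [if_pos hj, if_pos hj, if_neg (by omega), if_pos hj.2]
        · rw [if_neg hj, if_neg hj, mul_zero]
      rw [hRHS, ← Finset.sum_filter, ← Finset.sum_filter]
      refine Finset.sum_nbij'
        (fun i => (⟨k + (i.val - (n - l)), by have := i.isLt; omega⟩ : Fin n))
        (fun j => (⟨n - l + min (j.val - k) (l - 1), by omega⟩ : Fin n)) ?_ ?_ ?_ ?_ ?_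
      · intro i hi
        simp only [Finset.mem_filter, Finset.mem_univ, true_and] at hi ⊢
        have := i.isLt
        exact ⟨show k ≤ k + (i.val - (n - l)) by omega,
          show k + (i.val - (n - l)) < k + l by omega⟩
      · intro j hj
        simp only [Finset.mem_filter, Finset.mem_univ, true_and] at hj ⊢
        show n - l ≤ n - l + min (j.val - k) (l - 1)
        omega
      · intro i hi
        simp only [Finset.mem_filter, Finset.mem_univ, true_and] at hi
        have := i.isLt
        exact Fin.ext
          (show n - l + min (k + (i.val - (n - l)) - k) (l - 1) = i.val by omega)
      · intro j hj
        simp only [Finset.mem_filter, Finset.mem_univ, true_and] at hj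
        exact Fin.ext
          (show k + (n - l + min (j.val - k) (l - 1) - (n - l)) = j.val by omega)
      · intro i hi
        simp only [Finset.mem_filter, Finset.mem_univ, true_and] at hi
        have := i.isLt
        have hcgi : cIdx n k l hk hl hkl ⟨k + (i.val - (n - l)), by omega⟩ = i := by
          rw [cIdx, dif_neg (show ¬ k + (i.val - (n - l)) < k by omega),
            dif_pos (show k + (i.val - (n - l)) < k + l by omega)]
          exact Fin.ext (show n - l + (k + (i.val - (n - l)) - k) = i.val by omega)
        rw [hcgi]
    · simp only [if_neg hb, if_neg hb']
      have hn1 : n - 1 < n := by omega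
      have hcb : cIdx n k l hk hl hkl b = ⟨n - 1, hn1⟩ := by
        rw [cIdx, dif_neg hb, dif_neg hb']
      have hNcol : ∀ i : Fin n, Nm i (⟨n - 1, hn1⟩ : Fin n)
          = (1 : Matrix (Fin n) (Fin n) F) i ⟨n - 1, hn1⟩ := by
        intro i
        rcases eq_or_ne i (⟨n - 1, hn1⟩ : Fin n) with h | h
        · rw [h, hNm_diag, Matrix.one_apply_eq]
        · have hi : i.val < n - 1 := by
            have h2' : i.val ≠ n - 1 := fun hh => h (Fin.ext hh)
            have := i.isLt; omega
          rw [hNm_tri i _ (Fin.lt_def.mpr hi), Matrix.one_apply_ne h]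
      have hLHS : (∑ i, Nm a i *
          ((Nm⁻¹ * U * Nm) ^ (b.val - k - l + 2)) i (cIdx n k l hk hl hkl b))
          = (U ^ (b.val - k - l + 2)) a ⟨n - 1, hn1⟩ := by
        rw [conjPowAux U Nm h1 h2, ← Matrix.mul_apply,
          show Nm * (Nm⁻¹ * U ^ (b.val - k - l + 2) * Nm) = U ^ (b.val - k - l + 2) * Nm by
            rw [← Matrix.mul_assoc, ← Matrix.mul_assoc, h1, Matrix.one_mul],
          Matrix.mul_apply, hcb,
          show (∑ i, (U ^ (b.val - k - l + 2)) a i * Nm i (⟨n - 1, hn1⟩ : Fin n))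
            = ∑ i, (U ^ (b.val - k - l + 2)) a i *
                (1 : Matrix (Fin n) (Fin n) F) i ⟨n - 1, hn1⟩ from
            Finset.sum_congr rfl (fun i _ => by rw [hNcol i]),
          ← Matrix.mul_apply, Matrix.mul_one]
      rw [hLHS]
      symm
      rw [Finset.sum_eq_single b]
      · rw [if_pos rfl, mul_one, if_neg hb, if_neg hb', hcb]
      · intro j _ hj
        rw [if_neg hj, mul_zero]
      · intro h; exact absurd (Finset.mem_univ _) h

end Main

/-- The invariance property `φ̃_{kl}(A X N₋, A Y N₋) = φ̃_{kl}(X, Y)` for an invertible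
matrix `A` and a unipotent lower-triangular matrix `N₋`, where `X` is invertible. -/

theorem statement13 {F : Type*} [Field F] {n k l : ℕ} (hk : 1 ≤ k) (hl : 1 ≤ l)
    (hkl : k + l ≤ n) (X Y : Matrix (Fin n) (Fin n) F) (hX : IsUnit X.det)
    (A Nm : Matrix (Fin n) (Fin n) F) (hA : IsUnit A.det)
    (hNm_tri : ∀ a b : Fin n, a < b → Nm a b = 0) (hNm_diag : ∀ a : Fin n, Nm a a = 1) :
    phitilde n k l (A * X * Nm) (A * Y * Nm) = phitilde n k l X Y := by
  have hdetNm : Nm.det = 1 := by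
    rw [Matrix.det_of_lowerTriangular Nm (fun i j h => hNm_tri i j h)]
    exact Finset.prod_eq_one (fun i _ => hNm_diag i)
  have hNu : IsUnit Nm.det := by rw [hdetNm]; exact isUnit_one
  have h1 : Nm * Nm⁻¹ = 1 := Matrix.mul_nonsing_inv Nm hNu
  have h2 : Nm⁻¹ * Nm = 1 := Matrix.nonsing_inv_mul Nm hNu
  have hdetB : (Bmat hk hl hkl Nm).det = 1 := by
    have htri : ∀ i j : Fin n, i < j → Bmat hk hl hkl Nm i j = 0 := by
      intro i j hij
      have hv : i.val < j.val := hij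
      simp only [Bmat, Matrix.of_apply]
      by_cases hj : j.val < k
      · rw [if_pos hj, if_pos (show i.val < k by omega)]
        apply hNm_tri
        simp only [cIdx]
        rw [dif_pos (show i.val < k by omega), dif_pos hj]
        exact Fin.lt_def.mpr (show n - k + i.val < n - k + j.val by omega)
      · by_cases hj' : j.val < k + l
        · rw [if_neg hj, if_pos hj']
          by_cases hik : k ≤ i.val ∧ i.val < k + l
          · rw [if_pos hik]
            apply hNm_tri
            simp only [cIdx]
            rw [dif_neg (show ¬ i.val < k by omega), dif_pos hik.2, dif_neg hj, dif_pos hj']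
            exact Fin.lt_def.mpr (show n - l + (i.val - k) < n - l + (j.val - k) by omega)
          · rw [if_neg hik]
        · rw [if_neg hj, if_neg hj', if_neg (Fin.ne_of_lt hij)]
    rw [Matrix.det_of_lowerTriangular _ (fun i j h => htri i j h)]
    refine Finset.prod_eq_one (fun i _ => ?_)
    simp only [Bmat, Matrix.of_apply]
    by_cases hi : i.val < k
    · rw [if_pos hi, if_pos hi, hNm_diag]
    · by_cases hi' : i.val < k + l
      · rw [if_neg hi, if_pos hi', if_pos ⟨le_of_not_gt hi, hi'⟩, hNm_diag]
      · rw [if_neg hi, if_neg hi', if_true]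
  rw [phitilde_eq hk hl hkl, phitilde_eq hk hl hkl]
  have hU : (A * X * Nm)⁻¹ * (A * Y * Nm) = Nm⁻¹ * (X⁻¹ * Y) * Nm := by
    rw [Matrix.mul_inv_rev, Matrix.mul_inv_rev]
    have hA' : A⁻¹ * A = 1 := Matrix.nonsing_inv_mul A hA
    rw [show Nm⁻¹ * (X⁻¹ * A⁻¹) * (A * Y * Nm) = Nm⁻¹ * (X⁻¹ * ((A⁻¹ * A) * Y)) * Nm by
        noncomm_ring,
      hA', Matrix.one_mul]
  rw [hU]
  have hkey := congrArg Matrix.det (key hk hl hkl (X⁻¹ * Y) Nm hNm_tri hNm_diag h1 h2)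
  rw [Matrix.det_mul, Matrix.det_mul, hdetNm, hdetB, one_mul, mul_one] at hkey
  exact hkey
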